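/- (Equations (310)–(312)) Let σ be a Sturm permutation of {1,…,N} and let j0 < j1 < j2 ≤ N be labels with σ⁻¹(j1) = σ⁻¹(j0) + 1 (the positions of j0 and j1 are adjacent on the horizontal axis) and with i_{j1} even. Then the crossing numbers satisfy: c(j1,j2;j1) = c(j1,j2;j0) if σ⁻¹(j1+1) > σ⁻¹(j1) (the arc from j1 to j1+1 lies in an odd quadrant with respect to j1), and c(j1,j2;j1) = c(j1,j2;j0) + 1 if σ⁻¹(j1+1) < σ⁻¹(j1) (even quadrant). -/

import Mathlib

/-!  Combinatorial framework for Sturm permutations, following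
Fiedler–Rocha.  A permutation `σ` of `ℕ` represents a permutation of the
labels `{1,…,N}`; it is required to fix all labels outside of `{1,…,N}`.
`pos σ j = σ⁻¹ j` is the position of the label `j` on the horizontal axis. -/

/-- Position of the label `j` on the horizontal axis: `pos j = σ⁻¹ j`. -/
def pos (σ : Equiv.Perm ℕ) (j : ℕ) : ℤ := (σ.symm j : ℤ)

/-- Morse numbers: `i₁ = 0`, `i_{j+1} = i_j + (-1)^(j+1) · sign (pos (j+1) - pos j)`. -/
def morse (σ : Equiv.Perm ℕ) : ℕ → ℤ
  | 0 => 0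
  | 1 => 0
  | (j + 2) => morse σ (j + 1) + (-1) ^ (j + 2) * Int.sign (pos σ (j + 2) - pos σ (j + 1))

/-- Lower position endpoint of the arc joining positions of labels `j` and `j+1`. -/
def arcLo (σ : Equiv.Perm ℕ) (j : ℕ) : ℕ := min (σ.symm j) (σ.symm (j + 1))

/-- Upper position endpoint of the arc joining positions of labels `j` and `j+1`. -/
def arcHi (σ : Equiv.Perm ℕ) (j : ℕ) : ℕ := max (σ.symm j) (σ.symm (j + 1))

/-- Meander permutation: any two arcs in the same half-plane (arc `j` lies in the
upper half-plane for odd `j`, in the lower one for even `j`) have position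
intervals that are disjoint or strictly nested. -/
def IsMeander (N : ℕ) (σ : Equiv.Perm ℕ) : Prop :=
  ∀ j k, 1 ≤ j → j < N → 1 ≤ k → k < N → j ≠ k → j % 2 = k % 2 →
    arcHi σ j < arcLo σ k ∨ arcHi σ k < arcLo σ j ∨
    (arcLo σ j < arcLo σ k ∧ arcHi σ k < arcHi σ j) ∨
    (arcLo σ k < arcLo σ j ∧ arcHi σ j < arcHi σ k)

/-- A Sturm permutation of `{1,…,N}` (`N` odd): a dissipative Morse meander
permutation, represented as a permutation of `ℕ` fixing everything outside `{1,…,N}`. -/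
structure IsSturm (N : ℕ) (σ : Equiv.Perm ℕ) : Prop where
  odd_N : Odd N
  one_le : 1 ≤ N
  fix_outside : ∀ j, j = 0 ∨ N < j → σ j = j
  dissip_one : σ 1 = 1
  dissip_N : σ N = N
  meander : IsMeander N σ
  morse_nonneg : ∀ j, 1 ≤ j → j ≤ N → 0 ≤ morse σ j

/-- Zero numbers, downward recursion: `z_{j,N} = 0` and
`z_{j,k} = z_{j,k+1} + (1/2)·(-1)^k·[sign(pos(k+1)-pos j) - sign(pos k - pos j)]`. -/
def znRec (σ : Equiv.Perm ℕ) (N j k : ℕ) : ℤ :=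
  if h : N ≤ k then 0
  else znRec σ N j (k + 1) +
    ((-1 : ℤ) ^ k * (Int.sign (pos σ (k + 1) - pos σ j) - Int.sign (pos σ k - pos σ j))) / 2
termination_by N - k
decreasing_by omega

/-- Symmetrized zero number `z_{j,k} = z_{k,j}`. -/
def znum (σ : Equiv.Perm ℕ) (N j k : ℕ) : ℤ :=
  if j ≤ k then znRec σ N j k else znRec σ N k j

/-- `a` and `b` are `z`-adjacent: no label `m` strictly between them (in the label
order) with `z_{a,m} = z_{m,b} = z_{a,b}`. -/
def ZAdj (σ : Equiv.Perm ℕ) (N a b : ℕ) : Prop :=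
  ∀ m, min a b < m → m < max a b →
    ¬ (znum σ N (min a b) m = znum σ N a b ∧ znum σ N m (max a b) = znum σ N a b)

/-- Heteroclinic connection `a ⤳ b`: `i_a > i_b` and `a, b` are `z`-adjacent. -/
def Connects (σ : Equiv.Perm ℕ) (N a b : ℕ) : Prop :=
  morse σ b < morse σ a ∧ ZAdj σ N a b

/-- The target set `E^k_s(j0)`; the sign `s = true` stands for `+`, `s = false` for `−`. -/
def targetSet (σ : Equiv.Perm ℕ) (N j0 : ℕ) (k : ℤ) (s : Bool) : Set ℕ :=
  {m | 1 ≤ m ∧ m ≤ N ∧ (if s then j0 < m else m < j0) ∧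
       znum σ N j0 m = k ∧ Connects σ N j0 m}

/-- `pos_ι`: position of the label `m` in the boundary order at `x = ι`:
`pos_0 m = m` and `pos_1 m = σ⁻¹ m`. -/
def posFn (σ : Equiv.Perm ℕ) (ι : Fin 2) (m : ℕ) : ℤ :=
  if ι = 0 then (m : ℤ) else (σ.symm m : ℤ)

/-- `w` is the element of `E` closest to `j0` with respect to the position function `p`. -/
def IsClosest (p : ℕ → ℤ) (j0 : ℕ) (E : Set ℕ) (w : ℕ) : Prop :=
  w ∈ E ∧ ∀ m ∈ E, |p w - p j0| ≤ |p m - p j0|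

/-- `w` is the element of `E` most distant from `j0` with respect to the position
function `p`. -/
def IsFarthest (p : ℕ → ℤ) (j0 : ℕ) (E : Set ℕ) (w : ℕ) : Prop :=
  w ∈ E ∧ ∀ m ∈ E, |p m - p j0| ≤ |p w - p j0|

/-- The boundary neighbors of `j0`: `w^0_± = j0 ± 1` and `w^1_± = σ(σ⁻¹ j0 ± 1)`
(`s = true` is `+`, `s = false` is `−`; subtraction is truncated ℕ-subtraction,
definedness being imposed by the requirement `1 ≤ w ≤ N`). -/
def bdryNbr (σ : Equiv.Perm ℕ) (j0 : ℕ) (ι : Fin 2) (s : Bool) : ℕ :=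
  if ι = 0 then (if s then j0 + 1 else j0 - 1)
  else (if s then σ (σ.symm j0 + 1) else σ (σ.symm j0 - 1))

/-- Elementary crossing number `c(k,k+1;ℓ)`. -/
def cross1 (σ : Equiv.Perm ℕ) (k ℓ : ℕ) : ℤ :=
  if ℓ = k ∨ ℓ = k + 1 then 0
  else ((-1 : ℤ) ^ (k + 1) *
    (Int.sign (pos σ (k + 1) - pos σ ℓ) - Int.sign (pos σ k - pos σ ℓ))) / 2

/-- Crossing number `c(j,k;ℓ) = Σ_{m=j}^{k-1} c(m,m+1;ℓ)`. -/
def cross (σ : Equiv.Perm ℕ) (j k ℓ : ℕ) : ℤ :=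
  ∑ m ∈ Finset.Ico j k, cross1 σ m ℓ

/-! ### Shifted conventions, for permutations of the label set `{0,…,N+1}`
(used for the suspension `σ̃` of a Sturm permutation). -/

/-- Morse numbers for the shifted label set `{0,…,M}`:
`ĩ_0 = 0`, `ĩ_{j+1} = ĩ_j + (-1)^j · sign (pos (j+1) - pos j)`. -/
def morseT (σ : Equiv.Perm ℕ) : ℕ → ℤ
  | 0 => 0
  | (j + 1) => morseT σ j + (-1) ^ j * Int.sign (pos σ (j + 1) - pos σ j)

/-- Meander property for the shifted label set `{0,…,M}`: arc `j` (for `0 ≤ j < M`)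
lies in the upper half-plane for even `j` and in the lower one for odd `j`. -/
def IsMeanderT (M : ℕ) (σ : Equiv.Perm ℕ) : Prop :=
  ∀ j k, j < M → k < M → j ≠ k → j % 2 = k % 2 →
    arcHi σ j < arcLo σ k ∨ arcHi σ k < arcLo σ j ∨
    (arcLo σ j < arcLo σ k ∧ arcHi σ k < arcHi σ j) ∨
    (arcLo σ k < arcLo σ j ∧ arcHi σ j < arcHi σ k)

/-- Zero numbers for the shifted label set `{0,…,M}`: `z̃_{j,M} = 0` and
`z̃_{j,k} = z̃_{j,k+1} + (1/2)·(-1)^{k+1}·[sign(pos(k+1)-pos j) - sign(pos k - pos j)]`. -/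
def znRecT (σ : Equiv.Perm ℕ) (M j k : ℕ) : ℤ :=
  if h : M ≤ k then 0
  else znRecT σ M j (k + 1) +
    ((-1 : ℤ) ^ (k + 1) * (Int.sign (pos σ (k + 1) - pos σ j) - Int.sign (pos σ k - pos σ j))) / 2
termination_by M - k
decreasing_by omega

/-- Symmetrized shifted zero number. -/
def znumT (σ : Equiv.Perm ℕ) (M j k : ℕ) : ℤ :=
  if j ≤ k then znRecT σ M j k else znRecT σ M k j

/-- `z`-adjacency with respect to the shifted zero numbers. -/
def ZAdjT (σ : Equiv.Perm ℕ) (M a b : ℕ) : Prop :=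
  ∀ m, min a b < m → m < max a b →
    ¬ (znumT σ M (min a b) m = znumT σ M a b ∧ znumT σ M m (max a b) = znumT σ M a b)

/-- Heteroclinic connection with respect to the shifted data. -/
def ConnectsT (σ : Equiv.Perm ℕ) (M a b : ℕ) : Prop :=
  morseT σ b < morseT σ a ∧ ZAdjT σ M a b

/-- Target set `E^k_s(j0)` for the shifted data (labels `{0,…,M}`). -/
def targetSetT (σ : Equiv.Perm ℕ) (M j0 : ℕ) (k : ℤ) (s : Bool) : Set ℕ :=
  {m | m ≤ M ∧ (if s then j0 < m else m < j0) ∧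
       znumT σ M j0 m = k ∧ ConnectsT σ M j0 m}

/-- **Equations (310)–(312).**  If the positions of `j0` and `j1` are adjacent on
the horizontal axis (`σ⁻¹ j1 = σ⁻¹ j0 + 1`) and `i_{j1}` is even, then
`c(j1,j2;j1) = c(j1,j2;j0)` when the arc from `j1` to `j1+1` lies in an odd
quadrant with respect to `j1` (`σ⁻¹(j1+1) > σ⁻¹(j1)`), and
`c(j1,j2;j1) = c(j1,j2;j0) + 1` in the even-quadrant case (`σ⁻¹(j1+1) < σ⁻¹(j1)`). -/
lemma sign_sub_one_aux (a : ℤ) (h0 : a ≠ 0) (h1 : a ≠ 1) :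
    Int.sign (a - 1) = Int.sign a := by
  rcases lt_trichotomy a 0 with h | h | h
  · rw [Int.sign_eq_neg_one_of_neg h, Int.sign_eq_neg_one_of_neg (by omega)]
  · exact absurd h h0
  · rw [Int.sign_eq_one_of_pos h, Int.sign_eq_one_of_pos (by omega)]

lemma morse_parity_aux (σ : Equiv.Perm ℕ) (j : ℕ) :
    Odd (morse σ (j + 1) + (j + 1 : ℤ)) := by
  induction j with
  | zero => simp [morse]
  | succ n ih =>
    have hne : pos σ (n + 2) - pos σ (n + 1) ≠ 0 := by
      intro h
      have : (σ.symm (n + 2) : ℤ) = (σ.symm (n + 1) : ℤ) := by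
        simpa [pos, sub_eq_zero] using h
      have := σ.symm.injective (by exact_mod_cast this)
      omega
    have hs : Int.sign (pos σ (n + 2) - pos σ (n + 1)) = 1 ∨
        Int.sign (pos σ (n + 2) - pos σ (n + 1)) = -1 := by
      rcases lt_trichotomy (pos σ (n + 2) - pos σ (n + 1)) 0 with h | h | h
      · exact Or.inr (Int.sign_eq_neg_one_of_neg h)
      · exact absurd h hne
      · exact Or.inl (Int.sign_eq_one_of_pos h)
    have hp : ((-1 : ℤ)) ^ (n + 2) = 1 ∨ ((-1 : ℤ)) ^ (n + 2) = -1 := by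
      rcases Nat.even_or_odd (n + 2) with h | h
      · exact Or.inl h.neg_one_pow
      · exact Or.inr h.neg_one_pow
    have hm : morse σ (n + 1 + 1) = morse σ (n + 1) +
        (-1) ^ (n + 2) * Int.sign (pos σ (n + 2) - pos σ (n + 1)) := rfl
    have key : morse σ (n + 1 + 1) + ((n : ℤ) + 1 + 1) =
        (morse σ (n + 1) + ((n : ℤ) + 1)) +
          ((-1) ^ (n + 2) * Int.sign (pos σ (n + 2) - pos σ (n + 1)) + 1) := by
      rw [hm]; ring
    have heven : Even ((-1 : ℤ) ^ (n + 2) *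
        Int.sign (pos σ (n + 2) - pos σ (n + 1)) + 1) := by
      rcases hs with h | h <;> rcases hp with h' | h' <;>
        norm_num [h, h']
    have := ih.add_even heven
    have goal : Odd (morse σ (n + 1 + 1) + ((n : ℤ) + 1 + 1)) := key ▸ this
    convert goal using 2; push_cast; ring

theorem crossing_number_shift
    (N : ℕ) (σ : Equiv.Perm ℕ) (hS : IsSturm N σ)
    (j0 j1 j2 : ℕ) (hj01 : 1 ≤ j0) (h01 : j0 < j1) (h12 : j1 < j2) (hj2N : j2 ≤ N)
    (hadj : σ.symm j1 = σ.symm j0 + 1)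
    (heven : Even (morse σ j1)) :
    (σ.symm j1 < σ.symm (j1 + 1) → cross σ j1 j2 j1 = cross σ j1 j2 j0) ∧
    (σ.symm (j1 + 1) < σ.symm j1 → cross σ j1 j2 j1 = cross σ j1 j2 j0 + 1) := by
  -- j1 is odd
  have hoddj1 : Odd j1 := by
    obtain ⟨k, hk⟩ : ∃ k, j1 = k + 1 := ⟨j1 - 1, by omega⟩
    have hpar := morse_parity_aux σ k
    rw [← hk] at hpar
    rcases Nat.even_or_odd j1 with h | h
    · exfalso
      have : Even ((j1 : ℤ)) := by exact_mod_cast h.natCast (α := ℤ)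
      have hodd' : Odd (morse σ j1 + (j1 : ℤ)) := by
        convert hpar using 2; push_cast [hk]; ring
      have := heven.add this
      exact (Int.not_odd_iff_even.mpr this) hodd'
    · exact h
  have hpos : pos σ j1 = pos σ j0 + 1 := by
    simp only [pos, hadj]; push_cast; ring
  -- sign equality for labels distinct from j0 and j1
  have hsign : ∀ x : ℕ, x ≠ j0 → x ≠ j1 →
      Int.sign (pos σ x - pos σ j1) = Int.sign (pos σ x - pos σ j0) := by
    intro x hx0 hx1
    have h0 : pos σ x - pos σ j0 ≠ 0 := by
      intro h
      have : (σ.symm x : ℤ) = (σ.symm j0 : ℤ) := by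
        simpa [pos, sub_eq_zero] using h
      exact hx0 (σ.symm.injective (by exact_mod_cast this))
    have h1 : pos σ x - pos σ j0 ≠ 1 := by
      intro h
      have : pos σ x = pos σ j1 := by rw [hpos]; omega
      have : (σ.symm x : ℤ) = (σ.symm j1 : ℤ) := by simpa [pos] using this
      exact hx1 (σ.symm.injective (by exact_mod_cast this))
    have : pos σ x - pos σ j1 = pos σ x - pos σ j0 - 1 := by rw [hpos]; ring
    rw [this]
    exact sign_sub_one_aux _ h0 h1
  -- terms with m > j1 agree
  have hterm : ∀ m, j1 < m → cross1 σ m j1 = cross1 σ m j0 := by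
    intro m hm
    unfold cross1
    rw [if_neg (by omega), if_neg (by omega),
      hsign m (by omega) (by omega), hsign (m + 1) (by omega) (by omega)]
  -- split the sum
  have hsplit : ∀ ℓ, cross σ j1 j2 ℓ =
      cross1 σ j1 ℓ + ∑ m ∈ Finset.Ico (j1 + 1) j2, cross1 σ m ℓ := by
    intro ℓ
    unfold cross
    exact Finset.sum_eq_sum_Ico_succ_bot h12 _
  have hrest : ∑ m ∈ Finset.Ico (j1 + 1) j2, cross1 σ m j1 =
      ∑ m ∈ Finset.Ico (j1 + 1) j2, cross1 σ m j0 := by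
    refine Finset.sum_congr rfl fun m hm => ?_
    exact hterm m (by simpa using (Finset.mem_Ico.mp hm).1)
  have h11 : cross1 σ j1 j1 = 0 := by simp [cross1]
  have hsj1 : Int.sign (pos σ j1 - pos σ j0) = 1 := by
    rw [hpos]; simp
  have hne10 : pos σ (j1 + 1) ≠ pos σ j0 := by
    intro h
    have : (σ.symm (j1 + 1) : ℤ) = (σ.symm j0 : ℤ) := by simpa [pos] using h
    have := σ.symm.injective (by exact_mod_cast this)
    omega
  constructor
  · intro hlt
    have hgt : pos σ j0 + 1 < pos σ (j1 + 1) := by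
      rw [← hpos]; simpa [pos] using (by exact_mod_cast hlt : (σ.symm j1 : ℤ) < (σ.symm (j1 + 1) : ℤ))
    have h10 : cross1 σ j1 j0 = 0 := by
      unfold cross1
      rw [if_neg (by omega), hsj1, Int.sign_eq_one_of_pos (by omega)]
      simp
    rw [hsplit j1, hsplit j0, h11, h10, hrest]
  · intro hlt
    have hgt : pos σ (j1 + 1) < pos σ j0 + 1 := by
      rw [← hpos]; simpa [pos] using (by exact_mod_cast hlt : (σ.symm (j1 + 1) : ℤ) < (σ.symm j1 : ℤ))
    have h10 : cross1 σ j1 j0 = -1 := by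
      unfold cross1
      rw [if_neg (by omega), hsj1,
        Int.sign_eq_neg_one_of_neg (by omega : pos σ (j1 + 1) - pos σ j0 < 0)]
      have : ((-1 : ℤ)) ^ (j1 + 1) = 1 := (Odd.add_one hoddj1).neg_one_pow
      rw [this]; norm_num
    rw [hsplit j1, hsplit j0, h11, h10, hrest]
    ring
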